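/- Fix α ∈ ℝ and let f be a function in the dyadic Zygmund class Λ_{*d}^α with respect to the translated dyadic grid D^α. Then for all I, J ∈ D^α, |Δ₁f(I) − Δ₁f(J)| ≤ ‖f‖_{*d} · dist_α(I,J). -/

import Mathlib

noncomputable section
open MeasureTheory
open scoped ENNReal NNReal

/-- Second divided difference `Δ₂f(x,h) = (f(x+h) - 2f(x) + f(x-h))/h`. -/
def delta2 (f : ℝ → ℝ) (x h : ℝ) : ℝ := (f (x + h) - 2 * f x + f (x - h)) / h

/-- `M` is a bound for the Zygmund seminorm of `f`. -/
def ZygBound (f : ℝ → ℝ) (M : ℝ) : Prop := ∀ x h : ℝ, 0 < h → |delta2 f x h| ≤ M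

/-- `f` belongs to the Zygmund class `Λ_*`. -/
def MemZygmund (f : ℝ → ℝ) : Prop := Continuous f ∧ ∃ M, ZygBound f M

/-- The Zygmund seminorm `‖f‖_* = sup_{x, h>0} |Δ₂f(x,h)|`. -/
def zygNorm (f : ℝ → ℝ) : ℝ := sInf {M | 0 ≤ M ∧ ZygBound f M}

/-- Average of `g` over the interval `(a,b)`. -/
def intervalAvg (g : ℝ → ℝ) (a b : ℝ) : ℝ := (b - a)⁻¹ * ∫ t in a..b, g t

/-- `M` bounds the mean oscillation of `g` over all finite intervals. -/
def BMOBound (g : ℝ → ℝ) (M : ℝ) : Prop := ∀ a b : ℝ, a < b →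
  (∫⁻ x in Set.Ioo a b, ENNReal.ofReal ((g x - intervalAvg g a b)^2))
    ≤ ENNReal.ofReal (M^2 * (b - a))

/-- `g` has bounded mean oscillation. -/
def MemBMO (g : ℝ → ℝ) : Prop := LocallyIntegrable g volume ∧ ∃ M, BMOBound g M

/-- `f ∈ I(BMO)`: `f` is continuous and its distributional derivative is a BMO
function, i.e. `f` is a primitive of a BMO function. -/
def MemIBMO (f : ℝ → ℝ) : Prop := Continuous f ∧
  ∃ g : ℝ → ℝ, MemBMO g ∧ ∀ x, f x = f 0 + ∫ t in (0:ℝ)..x, g t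

/-- The set `A(f,ε) = {(x,h) : h > 0, |Δ₂f(x,h)| > ε}` in the upper half-plane. -/
def Aset (f : ℝ → ℝ) (ε : ℝ) : Set (ℝ × ℝ) := {p | 0 < p.2 ∧ ε < |delta2 f p.1 p.2|}

/-- `∫_I ∫_0^{|I|} χ_{A(f,ε)}(x,h) dh dx / h` for the interval `I = (a,b)`. -/
def Cquant (f : ℝ → ℝ) (ε a b : ℝ) : ℝ≥0∞ :=
  ∫⁻ x in Set.Ioo a b, ∫⁻ h in Set.Ioo 0 (b - a),
    (Aset f ε).indicator (fun _ => (1:ℝ≥0∞)) (x, h) / ENNReal.ofReal h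

/-- `C(f,ε) = sup_I (1/|I|) ∫_I ∫_0^{|I|} χ_{A(f,ε)} dh dx/h < ∞`. -/
def CFinite (f : ℝ → ℝ) (ε : ℝ) : Prop :=
  ∃ K : ℝ, ∀ a b : ℝ, a < b → Cquant f ε a b ≤ ENNReal.ofReal (K * (b - a))

/-- `dist(f, I(BMO)) = inf {‖f - g‖_* : g ∈ I(BMO)}`. -/
def distIBMO (f : ℝ → ℝ) : ℝ :=
  sInf {r | ∃ g, MemIBMO g ∧ r = zygNorm (fun x => f x - g x)}

/-- The translation `t_n` of the dyadic grid of generation `n`: `t_n = 0` for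
`n ≥ 0`, and `t_n = (4^m - 1)/3` where `n = -2m+1` or `n = -2m` for `n < 0`. -/
def tshift (n : ℤ) : ℝ := if 0 ≤ n then 0 else ((4:ℝ) ^ (((1 - n) / 2).toNat) - 1) / 3

/-- Left endpoint of the `k`-th interval of generation `n` of the dyadic grid
translated by `-α` units. -/
def dyadicL (α : ℝ) (n k : ℤ) : ℝ := (k : ℝ) * 2 ^ (-n) - tshift n - α

/-- Right endpoint of the `k`-th interval of generation `n` of the dyadic grid
translated by `-α` units. -/
def dyadicR (α : ℝ) (n k : ℤ) : ℝ := ((k : ℝ) + 1) * 2 ^ (-n) - tshift n - α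

/-- The `k`-th dyadic interval of generation `n` in the translated grid `D^α`. -/
def dyadicIα (α : ℝ) (n k : ℤ) : Set ℝ := Set.Ico (dyadicL α n k) (dyadicR α n k)

/-- The `k`-th dyadic interval of generation `n` in the standard grid `D`. -/
def dyadicI (n k : ℤ) : Set ℝ := dyadicIα 0 n k

/-- Second divided difference of `f` on the dyadic interval `(n,k)` of the grid
`D^α`: `Δ₂f(I)` with centre the midpoint of `I` and step `|I|/2`. -/
def delta2Dα (f : ℝ → ℝ) (α : ℝ) (n k : ℤ) : ℝ :=
  delta2 f ((dyadicL α n k + dyadicR α n k) / 2) (2 ^ (-n - 1))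

/-- Second divided difference of `f` on a standard dyadic interval. -/
def delta2D (f : ℝ → ℝ) (n k : ℤ) : ℝ := delta2Dα f 0 n k

/-- `M` is a bound for the dyadic Zygmund seminorm `‖f‖_{*d}`. -/
def ZygDBound (f : ℝ → ℝ) (M : ℝ) : Prop := ∀ n k : ℤ, |delta2D f n k| ≤ M

/-- `f` belongs to the dyadic Zygmund class `Λ_{*d}`. -/
def MemZygmundD (f : ℝ → ℝ) : Prop := Continuous f ∧ ∃ M, ZygDBound f M

/-- The dyadic Zygmund seminorm `‖f‖_{*d} = sup_{I ∈ D} |Δ₂f(I)|`. -/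
def zygDNorm (f : ℝ → ℝ) : ℝ := sInf {M | 0 ≤ M ∧ ZygDBound f M}

/-- First divided difference of `f` on the interval `[a,b)`. -/
def delta1I (f : ℝ → ℝ) (a b : ℝ) : ℝ := (f b - f a) / (b - a)

/-- First divided difference of `f` on the dyadic interval `(n,k)` of `D^α`. -/
def delta1Dα (f : ℝ → ℝ) (α : ℝ) (n k : ℤ) : ℝ :=
  delta1I f (dyadicL α n k) (dyadicR α n k)


namespace Stmt12Aux

/-- The integer `d` such that `t_{n-1} - t_n = d·2^{-n}`. -/
def Dn (n : ℤ) : ℤ := if n ≤ 0 ∧ Even n then 1 else 0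

lemma tshift_step (n : ℤ) :
    tshift (n - 1) = tshift n + ((Dn n : ℤ) : ℝ) * (2:ℝ) ^ (-n) := by
  unfold tshift Dn
  rcases lt_trichotomy n 0 with hn | rfl | hn
  · rw [if_neg (by omega), if_neg (by omega)]
    rcases Int.even_or_odd n with he | ho
    · rw [if_pos ⟨by omega, he⟩]
      obtain ⟨m, hm⟩ := he
      have h1 : ((1 - n) / 2).toNat = (-m).toNat := by omega
      have h2 : ((1 - (n - 1)) / 2).toNat = (-m).toNat + 1 := by omega
      rw [h1, h2]
      have h4 : (2:ℝ) ^ (-n) = 4 ^ (-m).toNat := by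
        have hexp : -n = ((2 * (-m).toNat : ℕ) : ℤ) := by omega
        rw [hexp, zpow_natCast, pow_mul]
        norm_num
      rw [h4, pow_succ]
      push_cast
      ring
    · rw [if_neg (by simp [Int.not_even_iff_odd.mpr ho])]
      obtain ⟨m, hm⟩ := ho
      have h1 : ((1 - (n - 1)) / 2).toNat = ((1 - n) / 2).toNat := by omega
      rw [h1]
      push_cast
      ring
  · rw [if_neg (by omega), if_pos le_rfl, if_pos ⟨le_rfl, Even.zero⟩]
    norm_num
  · rw [if_pos (by omega : (0:ℤ) ≤ n - 1), if_pos (by omega : (0:ℤ) ≤ n),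
      if_neg (fun h => absurd h.1 (by omega))]
    push_cast
    ring

/-- Index of the parent (one generation coarser) of the `k`-th interval of
generation `n`. -/
def parentK (n k : ℤ) : ℤ := (k + Dn n) / 2

lemma key_int (n k : ℤ) : 2 * parentK n k - Dn n + (k + Dn n) % 2 = k := by
  unfold parentK; omega

lemma pow_neg_pred (n : ℤ) : (2:ℝ) ^ (-(n - 1)) = 2 * (2:ℝ) ^ (-n) := by
  have h : -(n - 1) = (-n) + 1 := by ring
  rw [h, zpow_add_one₀ (two_ne_zero)]
  ring

lemma parentL (α : ℝ) (n k : ℤ) :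
    dyadicL α n k = dyadicL α (n - 1) (parentK n k)
      + (((k + Dn n) % 2 : ℤ) : ℝ) * (2:ℝ) ^ (-n) := by
  unfold dyadicL
  rw [tshift_step, pow_neg_pred]
  have hk : ((2 * parentK n k - Dn n + (k + Dn n) % 2 : ℤ) : ℝ) = ((k : ℤ) : ℝ) := by
    exact_mod_cast congrArg (fun z : ℤ => (z : ℝ)) (key_int n k)
  push_cast at hk ⊢
  linear_combination (-1) * (2:ℝ) ^ (-n) * hk

lemma parentR (α : ℝ) (n k : ℤ) :
    dyadicR α n k = dyadicL α (n - 1) (parentK n k)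
      + ((((k + Dn n) % 2 : ℤ) : ℝ) + 1) * (2:ℝ) ^ (-n) := by
  unfold dyadicR dyadicL
  rw [tshift_step, pow_neg_pred]
  have hk : ((2 * parentK n k - Dn n + (k + Dn n) % 2 : ℤ) : ℝ) = ((k : ℤ) : ℝ) := by
    exact_mod_cast congrArg (fun z : ℤ => (z : ℝ)) (key_int n k)
  push_cast at hk ⊢
  linear_combination (-1) * (2:ℝ) ^ (-n) * hk

lemma parentRR (α : ℝ) (n p : ℤ) :
    dyadicR α (n - 1) p = dyadicL α (n - 1) p + 2 * (2:ℝ) ^ (-n) := by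
  unfold dyadicR dyadicL
  rw [pow_neg_pred]
  ring

lemma parent_subset (α : ℝ) (n k : ℤ) :
    dyadicIα α n k ⊆ dyadicIα α (n - 1) (parentK n k) := by
  have hc : (0:ℝ) < (2:ℝ) ^ (-n) := zpow_pos two_pos _
  have he0 : (0:ℤ) ≤ (k + Dn n) % 2 := by omega
  have he1 : (k + Dn n) % 2 ≤ 1 := by omega
  have he0' : (0:ℝ) ≤ (((k + Dn n) % 2 : ℤ) : ℝ) := by exact_mod_cast he0
  have he1' : (((k + Dn n) % 2 : ℤ) : ℝ) ≤ 1 := by exact_mod_cast he1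
  unfold dyadicIα
  apply Set.Ico_subset_Ico
  · rw [parentL α n k]
    nlinarith
  · rw [parentR α n k, parentRR α n (parentK n k)]
    nlinarith

lemma half_left (f : ℝ → ℝ) (a h : ℝ) (hh : 0 < h) :
    delta1I f a (a + h) - delta1I f a (a + 2 * h) = -(delta2 f (a + h) h) / 2 := by
  have h1 : a + h + h = a + 2 * h := by ring
  have h2 : a + h - h = a := by ring
  simp only [delta1I, delta2, h1, h2]
  rw [show a + h - a = h from by ring, show a + 2 * h - a = 2 * h from by ring]
  have hh' : h ≠ 0 := ne_of_gt hh
  field_simp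
  ring

lemma half_right (f : ℝ → ℝ) (a h : ℝ) (hh : 0 < h) :
    delta1I f (a + h) (a + 2 * h) - delta1I f a (a + 2 * h) = (delta2 f (a + h) h) / 2 := by
  have h1 : a + h + h = a + 2 * h := by ring
  have h2 : a + h - h = a := by ring
  simp only [delta1I, delta2, h1, h2]
  rw [show a + 2 * h - (a + h) = h from by ring, show a + 2 * h - a = 2 * h from by ring]
  have hh' : h ≠ 0 := ne_of_gt hh
  field_simp
  ring

lemma step_bound (f : ℝ → ℝ) (α : ℝ) (M : ℝ)
    (hf : ∀ n k : ℤ, |delta2Dα f α n k| ≤ M) (n k : ℤ) :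
    |delta1Dα f α n k - delta1Dα f α (n - 1) (parentK n k)| ≤ M / 2 := by
  set c := (2:ℝ) ^ (-n) with hcdef
  have hc : (0:ℝ) < c := zpow_pos two_pos _
  set a := dyadicL α (n - 1) (parentK n k) with ha
  have hRP : dyadicR α (n - 1) (parentK n k) = a + 2 * c := parentRR α n (parentK n k)
  have hd2 : delta2Dα f α (n - 1) (parentK n k) = delta2 f (a + c) c := by
    unfold delta2Dα
    rw [hRP]
    rw [show (a + (a + 2 * c)) / 2 = a + c from by ring,
      show -(n - 1) - 1 = -n from by ring]
  have hbound := hf (n - 1) (parentK n k)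
  rw [hd2] at hbound
  have hcase : (k + Dn n) % 2 = 0 ∨ (k + Dn n) % 2 = 1 := by omega
  unfold delta1Dα
  rcases hcase with he | he
  · have h1 : dyadicL α n k = a := by rw [parentL α n k, he]; push_cast; ring
    have h2 : dyadicR α n k = a + c := by rw [parentR α n k, he]; push_cast; ring
    rw [h1, h2, hRP, half_left f a c hc, abs_div, abs_neg, abs_two]
    linarith [abs_nonneg (delta2 f (a + c) c)]
  · have h1 : dyadicL α n k = a + c := by rw [parentL α n k, he]; push_cast; ring
    have h2 : dyadicR α n k = a + 2 * c := by rw [parentR α n k, he]; push_cast; ring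
    rw [h1, h2, hRP, half_right f a c hc, abs_div, abs_two]
    linarith [abs_nonneg (delta2 f (a + c) c)]

/-- Index of the `d`-fold ancestor (at generation `n - d`). -/
def ancK (n k : ℤ) : ℕ → ℤ
  | 0 => k
  | d + 1 => parentK (n - d) (ancK n k d)

lemma anc_subset (α : ℝ) (n k : ℤ) : ∀ d : ℕ,
    dyadicIα α n k ⊆ dyadicIα α (n - d) (ancK n k d)
  | 0 => by simp [ancK]
  | d + 1 => by
    refine (anc_subset α n k d).trans ?_
    have h := parent_subset α (n - d) (ancK n k d)
    have hgen : (n - (d : ℤ)) - 1 = n - ((d : ℕ) + 1 : ℕ) := by push_cast; ring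
    rw [hgen] at h
    exact h

lemma anc_bound (f : ℝ → ℝ) (α : ℝ) (M : ℝ)
    (hf : ∀ n k : ℤ, |delta2Dα f α n k| ≤ M) (n k : ℤ) : ∀ d : ℕ,
    |delta1Dα f α n k - delta1Dα f α (n - d) (ancK n k d)| ≤ (d : ℝ) * (M / 2)
  | 0 => by simp [ancK]
  | d + 1 => by
    have h1 := anc_bound f α M hf n k d
    have h2 := step_bound f α M hf (n - d) (ancK n k d)
    have hgen : (n - (d : ℤ)) - 1 = n - ((d + 1 : ℕ) : ℤ) := by push_cast; ring
    have hstep : ancK n k (d + 1) = parentK (n - d) (ancK n k d) := rfl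
    have htri := abs_sub_le (delta1Dα f α n k) (delta1Dα f α (n - d) (ancK n k d))
      (delta1Dα f α (n - (d : ℤ) - 1) (parentK (n - d) (ancK n k d)))
    rw [hstep, ← hgen]
    push_cast
    linarith

lemma same_gen (α : ℝ) (n k k' : ℤ) (x : ℝ)
    (h1 : x ∈ dyadicIα α n k) (h2 : x ∈ dyadicIα α n k') : k = k' := by
  have hc : (0:ℝ) < (2:ℝ) ^ (-n) := zpow_pos two_pos _
  obtain ⟨l1, r1⟩ := h1
  obtain ⟨l2, r2⟩ := h2
  unfold dyadicL at l1 l2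
  unfold dyadicR at r1 r2
  have hk1 : ((k : ℤ) : ℝ) < ((k' : ℤ) : ℝ) + 1 := by
    have hm : ((k : ℤ) : ℝ) * (2:ℝ) ^ (-n) < (((k' : ℤ) : ℝ) + 1) * (2:ℝ) ^ (-n) := by
      linarith
    exact (mul_lt_mul_iff_of_pos_right hc).mp hm
  have hk2 : ((k' : ℤ) : ℝ) < ((k : ℤ) : ℝ) + 1 := by
    have hm : ((k' : ℤ) : ℝ) * (2:ℝ) ^ (-n) < (((k : ℤ) : ℝ) + 1) * (2:ℝ) ^ (-n) := by
      linarith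
    exact (mul_lt_mul_iff_of_pos_right hc).mp hm
  have hk1' : k < k' + 1 := by exact_mod_cast hk1
  have hk2' : k' < k + 1 := by exact_mod_cast hk2
  omega

end Stmt12Aux

open Stmt12Aux in

/-- Lemma 4.3: if `f` belongs to the dyadic Zygmund class of the grid `D^α` with
`‖f‖_{*d} ≤ M`, and `P = P_α(I,J)` is the minimal common predecessor in `D^α` of
the dyadic intervals `I, J ∈ D^α`, then
`|Δ₁f(I) - Δ₁f(J)| ≤ ‖f‖_{*d}·dist_α(I,J)`, where
`dist_α(I,J) = log₂(|P|/|I|) + log₂(|P|/|J|)`. -/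
theorem stmt12 (α : ℝ) (f : ℝ → ℝ) (hcont : Continuous f) (M : ℝ)
    (hf : ∀ n k : ℤ, |delta2Dα f α n k| ≤ M)
    (n₁ k₁ n₂ k₂ np kp : ℤ)
    (hsub : dyadicIα α n₁ k₁ ∪ dyadicIα α n₂ k₂ ⊆ dyadicIα α np kp)
    (hmin : ∀ n k : ℤ, dyadicIα α n₁ k₁ ∪ dyadicIα α n₂ k₂ ⊆ dyadicIα α n k →
      dyadicIα α np kp ⊆ dyadicIα α n k) :
    |delta1Dα f α n₁ k₁ - delta1Dα f α n₂ k₂| ≤ M * (((n₁ - np : ℤ) : ℝ) + ((n₂ - np : ℤ) : ℝ)) := by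
  have hM0 : 0 ≤ M := le_trans (abs_nonneg _) (hf 0 0)
  have key : ∀ n k : ℤ, dyadicIα α n k ⊆ dyadicIα α np kp →
      np ≤ n ∧ |delta1Dα f α n k - delta1Dα f α np kp| ≤ ((n - np : ℤ) : ℝ) * (M / 2) := by
    intro n k hIP
    have hc : (0:ℝ) < (2:ℝ) ^ (-n) := zpow_pos two_pos _
    have hcp : (0:ℝ) < (2:ℝ) ^ (-np) := zpow_pos two_pos _
    have hne : dyadicL α n k < dyadicR α n k := by
      unfold dyadicL dyadicR; nlinarith
    have hep := (Set.Ico_subset_Ico_iff hne).mp hIP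
    have hlen : (2:ℝ) ^ (-n) ≤ (2:ℝ) ^ (-np) := by
      have hh1 := hep.1
      have hh2 := hep.2
      unfold dyadicL at hh1
      unfold dyadicR at hh2
      nlinarith
    have hnnp : np ≤ n := by
      have := (zpow_le_zpow_iff_right₀ (by norm_num : (1:ℝ) < 2)).mp hlen
      omega
    refine ⟨hnnp, ?_⟩
    set d := (n - np).toNat with hddef
    have hd : (d : ℤ) = n - np := Int.toNat_of_nonneg (by omega)
    have hgen : n - (d : ℤ) = np := by omega
    have hA := Stmt12Aux.anc_subset α n k d
    rw [hgen] at hA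
    have hx : dyadicL α n k ∈ dyadicIα α n k := ⟨le_rfl, hne⟩
    have hkeq : Stmt12Aux.ancK n k d = kp :=
      Stmt12Aux.same_gen α np _ kp (dyadicL α n k) (hA hx) (hIP hx)
    have hb := Stmt12Aux.anc_bound f α M hf n k d
    rw [hgen, hkeq] at hb
    have hcast : ((d : ℕ) : ℝ) = ((n - np : ℤ) : ℝ) := by exact_mod_cast congrArg (fun z : ℤ => (z : ℝ)) hd
    rw [hcast] at hb
    exact hb
  have h1 := key n₁ k₁ (Set.subset_union_left.trans hsub)
  have h2 := key n₂ k₂ (Set.subset_union_right.trans hsub)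
  have htri := abs_sub_le (delta1Dα f α n₁ k₁) (delta1Dα f α np kp) (delta1Dα f α n₂ k₂)
  have h2' : |delta1Dα f α np kp - delta1Dα f α n₂ k₂|
      = |delta1Dα f α n₂ k₂ - delta1Dα f α np kp| := abs_sub_comm _ _
  have hx1 : (0:ℝ) ≤ ((n₁ - np : ℤ) : ℝ) := by exact_mod_cast Int.sub_nonneg.mpr h1.1
  have hx2 : (0:ℝ) ≤ ((n₂ - np : ℤ) : ℝ) := by exact_mod_cast Int.sub_nonneg.mpr h2.1
  nlinarith [h1.2, h2.2, mul_nonneg hM0 (add_nonneg hx1 hx2)]
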